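/- Let S be a dense subsemigroup of ((0,∞),+) and let B, M ∈ M₀(S), with B having rows indexed by the positive ordinal α. Then the matrix (1̄ B 0 ; 0̄ 0 M), where 1̄ is the α×1 column of all 1's, belongs to M₀(S). Consequently, for any n ∈ ℕ and M₁,…,Mₙ ∈ M₀(S), the iterated block matrix with rows (1̄ M₁ 0 ⋯ 0), (0 0 1̄ M₂ ⋯ 0), …, (0 ⋯ 0 Mₙ) belongs to M₀(S). -/

import Mathlib

noncomputable section

/-- Addition of ultrafilters on ℝ: `B ∈ uAdd p q ↔ {x | {y | x + y ∈ B} ∈ q} ∈ p`. -/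
def uAdd (p q : Ultrafilter ℝ) : Ultrafilter ℝ :=
  p.bind fun x => q.map fun y => x + y

/-- `S` is a subsemigroup of `((0,∞),+)`. -/
def IsPosSubsemigroup (S : Set ℝ) : Prop :=
  S.Nonempty ∧ S ⊆ Set.Ioi 0 ∧ ∀ x ∈ S, ∀ y ∈ S, x + y ∈ S

/-- `0` is a limit point of `S`. -/
def DenseNearZero (S : Set ℝ) : Prop := ∀ ε > 0, ∃ x ∈ S, x < ε

/-- the `i`-th entry of `A x⃗`. -/
def mEntry {ι κ : Type} (A : ι → κ → ℚ) (x : κ → ℝ) (i : ι) : ℝ :=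
  ∑ᶠ j, (A i j : ℝ) * x j

/-- admissible matrix: no zero row, finitely many nonzero entries in each row. -/
def Admissible {ι κ : Type} (A : ι → κ → ℚ) : Prop :=
  (∀ i, A i ≠ 0) ∧ ∀ i, (Function.support (A i)).Finite

/-- `A` is image partition regular over `S`. -/
def IPRover {ι κ : Type} (S : Set ℝ) (A : ι → κ → ℚ) : Prop :=
  ∀ (k : ℕ) (c : ℝ → Fin (k + 1)), ∃ x : κ → ℝ, (∀ j, x j ∈ S) ∧
    ∃ m : Fin (k + 1), ∀ i, mEntry A x i ∈ S \ {0} ∧ c (mEntry A x i) = m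

/-- `A` is image partition regular near zero over `S`. -/
def IPRNearZero {ι κ : Type} (S : Set ℝ) (A : ι → κ → ℚ) : Prop :=
  ∀ (k : ℕ) (c : ℝ → Fin (k + 1)), ∀ δ > (0 : ℝ), ∃ x : κ → ℝ, (∀ j, x j ∈ S) ∧
    ∃ m : Fin (k + 1), ∀ i, mEntry A x i ∈ S \ {0} ∧
      mEntry A x i ∈ Set.Ioo 0 δ ∧ c (mEntry A x i) = m

/-- `I(A;S)`. -/
def ISet {ι κ : Type} (S : Set ℝ) (A : ι → κ → ℚ) : Set (Ultrafilter ℝ) :=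
  {p | S ∈ p ∧ ∀ P ∈ p, ∃ x : κ → ℝ, (∀ j, x j ∈ S) ∧ ∀ i, mEntry A x i ∈ P}

/-- `O⁺(S)`. -/
def Oplus (S : Set ℝ) : Set (Ultrafilter ℝ) :=
  {p | ∀ ε > (0 : ℝ), Set.Ioo 0 ε ∩ S ∈ p}

/-- `I₀(A;S)`. -/
def I0Set {ι κ : Type} (S : Set ℝ) (A : ι → κ → ℚ) : Set (Ultrafilter ℝ) :=
  {p | S ∈ p ∧ ∀ P ∈ p, ∀ ε > (0 : ℝ), ∃ x : κ → ℝ, (∀ j, x j ∈ S) ∧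
      ∀ i, mEntry A x i ∈ P ∩ Set.Ioo 0 ε}

/-- multiplication of an ultrafilter by a real constant. -/
def mulU (c : ℝ) (p : Ultrafilter ℝ) : Ultrafilter ℝ := p.map fun x => c * x

/-- `q·p = q-lim_{n} (n·p)` for `q ∈ βℕ`, `p ∈ βℝ`. -/
def actU (q : Ultrafilter ℕ) (p : Ultrafilter ℝ) : Ultrafilter ℝ :=
  q.bind fun n => p.map fun x => (n : ℝ) * x

/-- `I` is a two-sided ideal of `T ⊆ βℝ`. -/
def IsIdealIn (T I : Set (Ultrafilter ℝ)) : Prop :=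
  I.Nonempty ∧ I ⊆ T ∧ ∀ p ∈ T, ∀ q ∈ I, uAdd p q ∈ I ∧ uAdd q p ∈ I

/-- the smallest two-sided ideal of `T`. -/
def KK (T : Set (Ultrafilter ℝ)) : Set (Ultrafilter ℝ) :=
  ⋂₀ {I | IsIdealIn T I}

/-- `L` is a left ideal of `T`. -/
def IsLeftIdealIn (T L : Set (Ultrafilter ℝ)) : Prop :=
  L.Nonempty ∧ L ⊆ T ∧ ∀ p ∈ T, ∀ q ∈ L, uAdd p q ∈ L

/-- `L` is a minimal left ideal of `T`. -/
def IsMinLeftIdealIn (T L : Set (Ultrafilter ℝ)) : Prop :=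
  IsLeftIdealIn T L ∧ ∀ L', IsLeftIdealIn T L' → L' ⊆ L → L' = L

/-- `C ⊆ S` is central near zero. -/
def CentralNearZero (S C : Set ℝ) : Prop :=
  ∃ p : Ultrafilter ℝ, p ∈ KK (Oplus S) ∧ uAdd p p = p ∧ C ∈ p

/-- `C` is central* near zero: it belongs to every minimal idempotent of `O⁺(S)`. -/
def CentralStarNearZero (S C : Set ℝ) : Prop :=
  ∀ p : Ultrafilter ℝ, p ∈ KK (Oplus S) → uAdd p p = p → C ∈ p

/-- `C` is IP* near zero: it belongs to every idempotent of `O⁺(S)`. -/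
def IPStarNearZero (S C : Set ℝ) : Prop :=
  ∀ p : Ultrafilter ℝ, p ∈ Oplus S → uAdd p p = p → C ∈ p

/-- `A` is centrally image partition regular near zero over `S`. -/
def CIPRNearZero {ι κ : Type} (S : Set ℝ) (A : ι → κ → ℚ) : Prop :=
  ∀ C : Set ℝ, CentralNearZero S C →
    ∃ x : κ → ℝ, (∀ j, x j ∈ S) ∧ ∀ i, mEntry A x i ∈ C

/-- `T` is thick near zero in `S`. -/
def ThickNearZero (S T : Set ℝ) : Prop :=
  ∃ L : Set (Ultrafilter ℝ), IsLeftIdealIn (Oplus S) L ∧ ∀ p ∈ L, T ∈ p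

/-- membership in the class `𝓜₀(S)`. -/
def MemM0 {ι κ : Type} (S : Set ℝ) (A : ι → κ → ℚ) : Prop :=
  Admissible A ∧ ∀ T : Set ℝ, ThickNearZero S T →
    ∀ (k : ℕ) (c : ℝ → Fin (k + 1)), ∃ x : κ → ℝ, (∀ j, x j ∈ S) ∧
      ∃ m : Fin (k + 1), ∀ i, mEntry A x i ∈ T ∧ c (mEntry A x i) = m

/-- `A` is (finite) image partition regular (over ℕ). -/
def IPRoverNat {u v : ℕ} (A : Fin u → Fin v → ℚ) : Prop :=
  ∀ (k : ℕ) (c : ℕ → Fin (k + 1)), ∃ x : Fin v → ℕ, ∃ m : Fin (k + 1),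
    ∀ i, ∃ n : ℕ, 0 < n ∧ (n : ℚ) = ∑ j, A i j * (x j : ℚ) ∧ c n = m

/-- the compressed form of a finitely supported integer vector: delete the zeros,
then collapse equal consecutive entries. -/
def compress (r : ℕ → ℤ) (hr : (Function.support r).Finite) : List ℤ :=
  ((hr.toFinset.sort (· ≤ ·)).map r).destutter (· ≠ ·)

/-- `M` is the Milliken–Taylor matrix `MT(a⃗)`: its rows are exactly the finitely
supported integer vectors with compressed form `a⃗`. -/
def IsMTMatrix (a : List ℤ) (M : ℕ → ℕ → ℚ) : Prop :=
  (∀ i, ∃ (r : ℕ → ℤ) (hr : (Function.support r).Finite),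
      (M i = fun j => (r j : ℚ)) ∧ compress r hr = a) ∧
  ∀ (r : ℕ → ℤ) (hr : (Function.support r).Finite),
    compress r hr = a → ∃ i, M i = fun j => (r j : ℚ)

/-- the sum `f 0 + (f 1 + (⋯ + f k))` in `(βℝ, +)`. -/
def finSumU : ∀ {k : ℕ}, (Fin (k + 1) → Ultrafilter ℝ) → Ultrafilter ℝ
  | 0, f => f 0
  | _ + 1, f => uAdd (f 0) (finSumU fun i => f i.succ)

end

/-- the matrix `(1̄ B 0 ; 0̄ 0 M)`. -/
def oneBM {ι κ ιM κM : Type} (B : ι → κ → ℚ) (M : ιM → κM → ℚ) :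
    ι ⊕ ιM → Unit ⊕ κ ⊕ κM → ℚ
  | Sum.inl _, Sum.inl _ => 1
  | Sum.inl i, Sum.inr (Sum.inl j) => B i j
  | Sum.inr i, Sum.inr (Sum.inr j) => M i j
  | _, _ => 0

/-- the iterated block matrix with row blocks `(0 ⋯ 0 1̄ Mᵢ 0 ⋯ 0)` for `i + 1 < n` and
`(0 ⋯ 0 Mᵢ)` for the last block (whose unit column is identically zero). -/
def blockN (n : ℕ) {ι κ : Fin n → Type} (M : ∀ i, ι i → κ i → ℚ) :
    (Σ i, ι i) → (Σ i, Unit ⊕ κ i) → ℚ := fun r c =>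
  if h : r.1 = c.1 then
    match c.2 with
    | Sum.inl _ => if (r.1 : ℕ) + 1 < n then 1 else 0
    | Sum.inr j => M r.1 r.2 (cast (congrArg κ h).symm j)
  else 0


open Set Function Filter Topology

/-! ### Auxiliary lemmas -/

section Aux

lemma mem_uAdd {p q : Ultrafilter ℝ} {A : Set ℝ} :
    A ∈ uAdd p q ↔ {x | {y | x + y ∈ A} ∈ q} ∈ p := Iff.rfl

lemma uAdd_assoc' (p q r : Ultrafilter ℝ) : uAdd (uAdd p q) r = uAdd p (uAdd q r) := by
  apply Ultrafilter.coe_injective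
  apply Filter.ext
  intro A
  simp only [Ultrafilter.mem_coe, mem_uAdd]
  constructor
  · intro h
    refine Filter.mem_of_superset h ?_
    intro x hx
    refine Filter.mem_of_superset hx ?_
    intro y hy
    simpa [add_assoc] using hy
  · intro h
    refine Filter.mem_of_superset h ?_
    intro x hx
    refine Filter.mem_of_superset hx ?_
    intro y hy
    simpa [add_assoc] using hy

lemma exists_oplus_mem {S : Set ℝ} (U : Set ℝ)
    (h : ∀ ε > (0:ℝ), ∃ x, x ∈ U ∧ x ∈ S ∧ x ∈ Ioo 0 ε) :
    ∃ p ∈ Oplus S, U ∈ p := by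
  set t : Set ℝ := {x | x ∈ U ∧ x ∈ S ∧ 0 < x} with ht
  have hcl : (0:ℝ) ∈ closure t := by
    rw [Metric.mem_closure_iff]
    intro ε hε
    obtain ⟨x, hxU, hxS, hx0, hxε⟩ := h ε hε
    exact ⟨x, ⟨hxU, hxS, hx0⟩, by simpa [Real.dist_eq, abs_of_pos hx0] using hxε⟩
  have hne : (𝓝[t] (0:ℝ)).NeBot := mem_closure_iff_nhdsWithin_neBot.mp hcl
  refine ⟨Ultrafilter.of (𝓝[t] 0), ?_, ?_⟩
  · intro ε hε
    have hball : Metric.ball (0:ℝ) ε ∈ 𝓝 (0:ℝ) := Metric.ball_mem_nhds _ hε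
    have h1 : t ∩ Metric.ball 0 ε ∈ 𝓝[t] (0:ℝ) := inter_mem_nhdsWithin t hball
    have h2 : t ∩ Metric.ball 0 ε ⊆ Ioo 0 ε ∩ S := by
      rintro x ⟨⟨hxU, hxS, hx0⟩, hb⟩
      have : |x| < ε := by simpa [Real.dist_eq] using hb
      exact ⟨⟨hx0, lt_of_abs_lt this⟩, hxS⟩
    exact Ultrafilter.of_le _ (Filter.mem_of_superset h1 h2)
  · exact Ultrafilter.of_le _ (Filter.mem_of_superset self_mem_nhdsWithin fun x hx => hx.1)

lemma oplus_nonempty {S : Set ℝ} (hS : IsPosSubsemigroup S) (hd : DenseNearZero S) :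
    (Oplus S).Nonempty := by
  obtain ⟨p, hp, -⟩ := exists_oplus_mem (S := S) univ (fun ε hε => by
    obtain ⟨x, hxS, hxε⟩ := hd ε hε
    exact ⟨x, trivial, hxS, hS.2.1 hxS, hxε⟩)
  exact ⟨p, hp⟩

lemma oplus_uAdd {S : Set ℝ} (hS : IsPosSubsemigroup S) {p q : Ultrafilter ℝ}
    (hp : p ∈ Oplus S) (hq : q ∈ Oplus S) : uAdd p q ∈ Oplus S := by
  intro ε hε
  rw [mem_uAdd]
  refine Filter.mem_of_superset (hp (ε/2) (by linarith)) ?_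
  intro x hx
  refine Filter.mem_of_superset (hq (ε/2) (by linarith)) ?_
  rintro y ⟨⟨hy0, hyε⟩, hyS⟩
  obtain ⟨⟨hx0, hxε⟩, hxS⟩ := hx
  exact ⟨⟨by linarith, by linarith⟩, hS.2.2 x hxS y hyS⟩

lemma isClosed_oplus {S : Set ℝ} : IsClosed (Oplus S) := by
  have : Oplus S = ⋂ ε ∈ Ioi (0:ℝ), {p : Ultrafilter ℝ | Ioo 0 ε ∩ S ∈ p} := by
    ext p; simp [Oplus, mem_iInter]
  rw [this]
  exact isClosed_biInter fun ε _ => ultrafilter_isClosed_basic _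

lemma continuous_uAdd_right (q : Ultrafilter ℝ) : Continuous (fun p => uAdd p q) := by
  refine continuous_generateFrom_iff.mpr ?_
  rintro s ⟨A, rfl⟩
  exact ultrafilter_isOpen_basic {x | {y | x + y ∈ A} ∈ q}

/-- From thickness near zero we get a compact left ideal `L` with `T` in all its members,
which is "minimal enough": `O⁺(S) + r = L` for every `r ∈ L`. -/
lemma thick_good_ideal {S T : Set ℝ} (hS : IsPosSubsemigroup S) (hd : DenseNearZero S)
    (hT : ThickNearZero S T) :
    ∃ L : Set (Ultrafilter ℝ), IsLeftIdealIn (Oplus S) L ∧ IsClosed L ∧ (∀ p ∈ L, T ∈ p) ∧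
      ∀ r ∈ L, (fun q => uAdd q r) '' (Oplus S) = L := by
  obtain ⟨L₀, hL₀, hTL₀⟩ := hT
  obtain ⟨r₀, hr₀⟩ := hL₀.1
  have hONE := oplus_nonempty hS hd
  have himage : ∀ r ∈ Oplus S, IsLeftIdealIn (Oplus S) ((fun q => uAdd q r) '' (Oplus S)) ∧
      IsClosed ((fun q => uAdd q r) '' (Oplus S)) := by
    intro r hr
    have hcl : IsClosed ((fun q => uAdd q r) '' (Oplus S)) :=
      (((isClosed_oplus).isCompact).image (continuous_uAdd_right r)).isClosed
    refine ⟨⟨hONE.image _ , ?_, ?_⟩, hcl⟩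
    · rintro x ⟨q, hq, rfl⟩
      exact oplus_uAdd hS hq hr
    · rintro p hp x ⟨q, hq, rfl⟩
      exact ⟨uAdd p q, oplus_uAdd hS hp hq, uAdd_assoc' p q r⟩
  set L₁ := (fun q => uAdd q r₀) '' (Oplus S) with hL₁def
  have hL₁ : IsLeftIdealIn (Oplus S) L₁ ∧ IsClosed L₁ := himage r₀ (hL₀.2.1 hr₀)
  have hL₁sub : L₁ ⊆ L₀ := by
    rintro x ⟨q, hq, rfl⟩
    exact hL₀.2.2 q hq r₀ hr₀
  set 𝒮 : Set (Set (Ultrafilter ℝ)) :=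
    {L | L ⊆ L₁ ∧ IsClosed L ∧ IsLeftIdealIn (Oplus S) L} with h𝒮
  have hzorn := zorn_superset_nonempty 𝒮 ?_ L₁ ⟨Subset.rfl, hL₁.2, hL₁.1⟩
  · obtain ⟨L, hLsub, hLmin⟩ := hzorn
    obtain ⟨hL1, hLcl, hLid⟩ := hLmin.prop
    refine ⟨L, hLid, hLcl, fun p hp => hTL₀ p (hL₁sub (hL1 hp)), ?_⟩
    intro r hr
    have hrO : r ∈ Oplus S := hLid.2.1 hr
    obtain ⟨hKid, hKcl⟩ := himage r hrO
    have hKsubL : (fun q => uAdd q r) '' (Oplus S) ⊆ L := by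
      rintro x ⟨q, hq, rfl⟩
      exact hLid.2.2 q hq r hr
    exact hLmin.eq_of_subset ⟨hKsubL.trans hL1, hKcl, hKid⟩ hKsubL |>.symm ▸ rfl
  · rintro c hc𝒮 hchain ⟨L', hL'⟩
    refine ⟨⋂₀ c, ⟨?_, ?_, ?_, ?_, ?_⟩, fun s hs => sInter_subset_of_mem hs⟩
    · exact (sInter_subset_of_mem hL').trans (hc𝒮 hL').1
    · exact isClosed_sInter fun L hL => (hc𝒮 hL).2.1
    · have : (⋂ L : c, (L : Set (Ultrafilter ℝ))).Nonempty := by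
        refine IsCompact.nonempty_iInter_of_directed_nonempty_isCompact_isClosed
          (hι := ⟨⟨L', hL'⟩⟩) _ ?_ (fun L => (hc𝒮 L.2).2.2.1) (fun L => (hc𝒮 L.2).2.1.isCompact)
          (fun L => (hc𝒮 L.2).2.1)
        rintro ⟨a, ha⟩ ⟨b, hb⟩
        rcases hchain.total ha hb with h | h
        · exact ⟨⟨a, ha⟩, Subset.rfl, h⟩
        · exact ⟨⟨b, hb⟩, h, Subset.rfl⟩
      rwa [← sInter_eq_iInter] at this
    · exact fun p hp => (hc𝒮 hL').2.2.2.1 ((sInter_subset_of_mem hL') hp)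
    · intro p hp q hq
      exact mem_sInter.mpr fun L hL => (hc𝒮 hL).2.2.2.2 p hp q (mem_sInter.mp hq L hL)

/-- If `A ∈ 𝓜₀(S)` then `A` has an `I₀`-point in every compact left ideal. -/
lemma memM0_meets {ι κ : Type} {S : Set ℝ} (hS : IsPosSubsemigroup S)
    {A : ι → κ → ℚ} (hA : MemM0 S A) {L : Set (Ultrafilter ℝ)}
    (hL : IsLeftIdealIn (Oplus S) L) (hLc : IsClosed L) :
    ∃ p ∈ L, ∀ P ∈ p, ∀ ε > (0:ℝ), ∃ x : κ → ℝ, (∀ j, x j ∈ S) ∧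
      ∀ i, mEntry A x i ∈ P ∩ Set.Ioo 0 ε := by
  classical
  obtain ⟨s₀, hs₀⟩ := hS.1
  by_cases hι : Nonempty ι
  · by_contra hcon
    push_neg at hcon
    have hch : ∀ p : Ultrafilter ℝ, ∃ Pε : Set ℝ × ℝ,
        (p ∈ L → Pε.1 ∈ p ∧ Pε.2 > 0 ∧ ∀ x : κ → ℝ, (∀ j, x j ∈ S) →
          ∃ i, mEntry A x i ∉ Pε.1 ∩ Set.Ioo 0 Pε.2) ∧ (p ∉ L → Pε.1 = ∅) := by
      intro p
      by_cases hp : p ∈ L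
      · obtain ⟨P, hP, ε, hε, hbad⟩ := hcon p hp
        exact ⟨(P, ε), fun _ => ⟨hP, hε, hbad⟩, fun h => absurd hp h⟩
      · exact ⟨(∅, 1), fun h => absurd h hp, fun _ => rfl⟩
    choose Pε hPε using hch
    set P : Ultrafilter ℝ → Set ℝ := fun p => (Pε p).1 with hPdef
    set ε : Ultrafilter ℝ → ℝ := fun p => (Pε p).2 with hεdef
    have hLcomp : IsCompact L := hLc.isCompact
    have hcover : L ⊆ ⋃ p, {q : Ultrafilter ℝ | P p ∈ q} :=
      fun q hq => Set.mem_iUnion.mpr ⟨q, ((hPε q).1 hq).1⟩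
    obtain ⟨t, ht⟩ := hLcomp.elim_finite_subcover _ (fun p => ultrafilter_isOpen_basic (P p)) hcover
    have htL : ∀ q ∈ L, ∃ p ∈ t, p ∈ L ∧ P p ∈ q := by
      intro q hq
      obtain ⟨p, hpt, hPq⟩ := by simpa using ht hq
      by_cases hpL : p ∈ L
      · exact ⟨p, hpt, hpL, hPq⟩
      · have hPq' : (Pε p).1 ∈ q := hPq
        rw [(hPε p).2 hpL] at hPq'
        exact absurd hPq' (Ultrafilter.empty_notMem (f := q))
    set t' : Finset (Ultrafilter ℝ) := t.filter (· ∈ L) with ht'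
    have ht'L : ∀ p ∈ t', p ∈ L := fun p hp => (Finset.mem_filter.mp hp).2
    have htL' : ∀ q ∈ L, ∃ p ∈ t', P p ∈ q := by
      intro q hq
      obtain ⟨p, hpt, hpL, hPq⟩ := htL q hq
      exact ⟨p, Finset.mem_filter.mpr ⟨hpt, hpL⟩, hPq⟩
    set T : Set ℝ := ⋃ p ∈ t', P p ∩ Set.Ioo 0 (ε p) with hT
    have hTthick : ThickNearZero S T := by
      refine ⟨L, hL, fun q hq => ?_⟩
      obtain ⟨p, hpt, hPq⟩ := htL' q hq
      have hεp : Set.Ioo 0 (ε p) ∩ S ∈ q := hL.2.1 hq (ε p) ((hPε p).1 (ht'L p hpt)).2.1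
      refine Filter.mem_of_superset (Filter.inter_mem hPq hεp) ?_
      rintro x ⟨hx1, hx2, _⟩
      exact Set.mem_biUnion hpt ⟨hx1, hx2⟩
    set k := t'.card with hk
    set e : {x // x ∈ t'} ≃ Fin t'.card := t'.equivFin with he
    set c : ℝ → Fin (k + 1) := fun x =>
      if h : ∃ p, ∃ hp : p ∈ t', x ∈ P p ∩ Set.Ioo 0 (ε p)
      then (Fin.castLE (Nat.le_succ _) (e ⟨h.choose, h.choose_spec.1⟩))
      else Fin.last k with hc
    obtain ⟨x, hxS, m, hxm⟩ := hA.2 T hTthick k c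
    obtain ⟨i₀⟩ := hι
    have key : ∀ i : ι, ∃ hi : (∃ p, ∃ hp : p ∈ t', mEntry A x i ∈ P p ∩ Set.Ioo 0 (ε p)),
        Fin.castLE (Nat.le_succ _) (e ⟨hi.choose, hi.choose_spec.1⟩) = m := by
      intro i
      obtain ⟨hiT, hic⟩ := hxm i
      have hi : ∃ p, ∃ hp : p ∈ t', mEntry A x i ∈ P p ∩ Set.Ioo 0 (ε p) := by
        rw [hT, Set.mem_iUnion₂] at hiT
        exact hiT
      refine ⟨hi, ?_⟩
      simp only [hc] at hic
      rw [dif_pos hi] at hic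
      exact hic
    obtain ⟨h0, hm0⟩ := key i₀
    set pstar := h0.choose with hpstar
    have hpt' : pstar ∈ t' := h0.choose_spec.1
    have hall : ∀ i, mEntry A x i ∈ P pstar ∩ Set.Ioo 0 (ε pstar) := by
      intro i
      obtain ⟨hi, hmi⟩ := key i
      have : (⟨hi.choose, hi.choose_spec.1⟩ : {x // x ∈ t'}) = ⟨h0.choose, h0.choose_spec.1⟩ := by
        apply e.injective
        apply Fin.castLE_injective
        rw [hmi, hm0]
      have hval : hi.choose = pstar := congrArg Subtype.val this
      have := hi.choose_spec.2
      rwa [hval] at this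
    obtain ⟨ibad, hbad2⟩ := ((hPε pstar).1 (ht'L pstar hpt')).2.2 x hxS
    exact hbad2 (hall _)
  · obtain ⟨p, hp⟩ := hL.1
    exact ⟨p, hp, fun P hP ε hε => ⟨fun _ => s₀, fun _ => hs₀, fun i => absurd ⟨i⟩ hι⟩⟩

/-! ### finsum helpers -/

lemma finsum_sum_split {α β : Type} (f : α ⊕ β → ℝ) (hf : (Function.support f).Finite) :
    ∑ᶠ x, f x = (∑ᶠ a, f (Sum.inl a)) + ∑ᶠ b, f (Sum.inr b) := by
  rw [← finsum_mem_univ f, ← Set.range_inl_union_range_inr,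
    finsum_mem_union' Set.isCompl_range_inl_range_inr.disjoint
      (hf.subset Set.inter_subset_right) (hf.subset Set.inter_subset_right),
    finsum_mem_range Sum.inl_injective, finsum_mem_range Sum.inr_injective]

lemma finsum_comp_inj {κ κ' : Type} {g : κ' → ℝ} (e : κ → κ') (he : Function.Injective e)
    (hsupp : Function.support g ⊆ Set.range e) : ∑ᶠ j', g j' = ∑ᶠ c, g (e c) := by
  rw [← finsum_mem_univ g, ← finsum_mem_inter_support g Set.univ,
    show Set.univ ∩ Function.support g = Set.range e ∩ Function.support g by
      rw [Set.univ_inter, Set.inter_eq_right.mpr hsupp],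
    finsum_mem_inter_support, finsum_mem_range he]

/-! ### Entries of the block matrix `oneBM` -/

section entries
variable {ι κ ιM κM : Type} (B : ι → κ → ℚ) (M : ιM → κM → ℚ)

lemma mEntry_oneBM_inl (hB : ∀ i, (Function.support (B i)).Finite)
    (x : Unit ⊕ κ ⊕ κM → ℝ) (i : ι) :
    mEntry (oneBM B M) x (Sum.inl i)
      = x (Sum.inl ()) + mEntry B (fun j => x (Sum.inr (Sum.inl j))) i := by
  set F : Unit ⊕ κ ⊕ κM → ℝ := fun j => (oneBM B M (Sum.inl i) j : ℝ) * x j with hF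
  have hFfin : (Function.support F).Finite := by
    have hss : Function.support F ⊆
        Set.range Sum.inl ∪ (fun j => Sum.inr (Sum.inl j)) '' Function.support (B i) := by
      rintro (u | j | j) hj
      · exact Or.inl ⟨u, rfl⟩
      · refine Or.inr ⟨j, ?_, rfl⟩
        intro h0
        apply hj
        simp [hF, oneBM, h0]
      · exfalso; apply hj; simp [hF, oneBM]
    exact ((Set.finite_range Sum.inl).union ((hB i).image _)).subset hss
  have h1 : mEntry (oneBM B M) x (Sum.inl i) = ∑ᶠ j, F j := rfl
  rw [h1, finsum_sum_split F hFfin]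
  congr 1
  · rw [finsum_unique]; simp [hF, oneBM]
  · have hG : (Function.support fun b => F (Sum.inr b)).Finite :=
      (hFfin.preimage Sum.inr_injective.injOn)
    rw [finsum_sum_split _ hG]
    have h2 : ∑ᶠ (b : κM), F (Sum.inr (Sum.inr b)) = 0 := by
      simp [hF, oneBM]
    rw [h2, add_zero]
    rfl

lemma mEntry_oneBM_inr (hM : ∀ i, (Function.support (M i)).Finite)
    (x : Unit ⊕ κ ⊕ κM → ℝ) (i : ιM) :
    mEntry (oneBM B M) x (Sum.inr i) = mEntry M (fun j => x (Sum.inr (Sum.inr j))) i := by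
  set F : Unit ⊕ κ ⊕ κM → ℝ := fun j => (oneBM B M (Sum.inr i) j : ℝ) * x j with hF
  have hFfin : (Function.support F).Finite := by
    have hss : Function.support F ⊆ (fun j => Sum.inr (Sum.inr j)) '' Function.support (M i) := by
      rintro (u | j | j) hj
      · exfalso; apply hj; simp [hF, oneBM]
      · exfalso; apply hj; simp [hF, oneBM]
      · refine ⟨j, ?_, rfl⟩
        intro h0
        apply hj
        simp [hF, oneBM, h0]
    exact (((hM i).image _)).subset hss
  have h1 : mEntry (oneBM B M) x (Sum.inr i) = ∑ᶠ j, F j := rfl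
  rw [h1, finsum_sum_split F hFfin]
  have hu : ∑ᶠ (u : Unit), F (Sum.inl u) = 0 := by simp [hF, oneBM]
  have hG : (Function.support fun b => F (Sum.inr b)).Finite :=
    (hFfin.preimage Sum.inr_injective.injOn)
  rw [hu, zero_add, finsum_sum_split _ hG]
  have h2 : ∑ᶠ (b : κ), F (Sum.inr (Sum.inl b)) = 0 := by simp [hF, oneBM]
  rw [h2, zero_add]
  rfl

lemma admissible_oneBM (hB : Admissible B) (hM : Admissible M) : Admissible (oneBM B M) := by
  constructor
  · rintro (i | i)
    · intro h
      have : oneBM B M (Sum.inl i) (Sum.inl ()) = 0 := by rw [h]; rfl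
      simp [oneBM] at this
    · intro h
      obtain ⟨j, hj⟩ := Function.ne_iff.mp (hM.1 i)
      apply hj
      have : oneBM B M (Sum.inr i) (Sum.inr (Sum.inr j)) = 0 := by rw [h]; rfl
      simpa [oneBM] using this
  · rintro (i | i)
    · have hss : Function.support (oneBM B M (Sum.inl i)) ⊆
          Set.range Sum.inl ∪ (fun j => Sum.inr (Sum.inl j)) '' Function.support (B i) := by
        rintro (u | j | j) hj
        · exact Or.inl ⟨u, rfl⟩
        · exact Or.inr ⟨j, fun h0 => hj (by simp [oneBM, h0]), rfl⟩
        · exact absurd rfl hj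
      exact ((Set.finite_range Sum.inl).union ((hB.2 i).image _)).subset hss
    · have hss : Function.support (oneBM B M (Sum.inr i)) ⊆
          (fun j => Sum.inr (Sum.inr j)) '' Function.support (M i) := by
        rintro (u | j | j) hj
        · exact absurd rfl hj
        · exact absurd rfl hj
        · exact ⟨j, fun h0 => hj (by simp [oneBM, h0]), rfl⟩
      exact (((hM.2 i)).image _).subset hss

end entries

/-- **Main lemma**: `𝓜₀(S)` is closed under the `(1̄ B 0 ; 0̄ 0 M)` construction. -/
lemma oneBM_memM0 {ι κ ιM κM : Type} {S : Set ℝ} (hS : IsPosSubsemigroup S)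
    (hd : DenseNearZero S) {B : ι → κ → ℚ} (hB : MemM0 S B)
    {M : ιM → κM → ℚ} (hM : MemM0 S M) : MemM0 S (oneBM B M) := by
  refine ⟨admissible_oneBM B M hB.1 hM.1, ?_⟩
  intro T hT k c
  obtain ⟨L, hLid, hLcl, hTL, hLimg⟩ := thick_good_ideal hS hd hT
  obtain ⟨p, hpL, hpI0⟩ := memM0_meets hS hM hLid hLcl
  obtain ⟨r, hrL, hrI0⟩ := memM0_meets hS hB hLid hLcl
  have hTp : T ∈ p := hTL p hpL
  have hpart : ∃ m : Fin (k+1), T ∩ c ⁻¹' {m} ∈ p := by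
    by_contra h
    push_neg at h
    have h2 : ∀ m : Fin (k+1), (T ∩ c ⁻¹' {m})ᶜ ∈ p :=
      fun m => Ultrafilter.compl_mem_iff_notMem.mpr (h m)
    have h3 : (⋂ m : Fin (k+1), (T ∩ c ⁻¹' {m})ᶜ) ∈ p := iInter_mem.mpr h2
    obtain ⟨t0, ht0T, ht0⟩ := Filter.nonempty_of_mem (Filter.inter_mem hTp h3)
    exact (Set.mem_iInter.mp ht0 (c t0)) ⟨ht0T, rfl⟩
  obtain ⟨m, hTm⟩ := hpart
  have himg := hLimg r hrL
  rw [← himg] at hpL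
  obtain ⟨q, hqO, hqr⟩ := hpL
  have hD : {w : ℝ | {y | w + y ∈ T ∩ c ⁻¹' {m}} ∈ r} ∈ q := by
    rw [← hqr] at hTm
    exact mem_uAdd.mp hTm
  obtain ⟨x₀, hx₀D, hx₀I, hx₀S⟩ :=
    Filter.nonempty_of_mem (Filter.inter_mem hD (hqO 1 one_pos))
  obtain ⟨y, hyS, hy⟩ := hrI0 _ hx₀D 1 one_pos
  obtain ⟨z, hzS, hz⟩ := hpI0 _ hTm 1 one_pos
  refine ⟨Sum.elim (fun _ => x₀) (Sum.elim y z), ?_, m, ?_⟩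
  · rintro (u | j | j)
    · exact hx₀S
    · exact hyS j
    · exact hzS j
  · rintro (i | i)
    · rw [mEntry_oneBM_inl B M hB.1.2]
      have hmem : x₀ + mEntry B y i ∈ T ∩ c ⁻¹' {m} := (hy i).1
      exact ⟨hmem.1, hmem.2⟩
    · rw [mEntry_oneBM_inr B M hM.1.2]
      have hmem : mEntry M z i ∈ T ∩ c ⁻¹' {m} := (hz i).1
      exact ⟨hmem.1, hmem.2⟩

/-- Transfer of membership in `𝓜₀(S)` along a row map and an injective column map. -/
lemma memM0_of_inj {ι κ ι' κ' : Type} {S : Set ℝ} (hS : IsPosSubsemigroup S)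
    {A : ι → κ → ℚ} {A' : ι' → κ' → ℚ} (hA : MemM0 S A)
    (f : ι' → ι) (e : κ → κ') (he : Function.Injective e)
    (hz : ∀ r c', (∀ c, e c ≠ c') → A' r c' = 0)
    (hmat : ∀ r c, A' r (e c) = A (f r) c) : MemM0 S A' := by
  classical
  obtain ⟨s₀, hs₀⟩ := hS.1
  have hsupp : ∀ r, Function.support (A' r) ⊆ e '' Function.support (A (f r)) := by
    intro r c' hc'
    by_cases h : ∃ c, e c = c'
    · obtain ⟨c, rfl⟩ := h
      rw [Function.mem_support, hmat] at hc'
      exact ⟨c, hc', rfl⟩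
    · exact absurd (hz r c' (fun c hc => h ⟨c, hc⟩)) hc'
  constructor
  · constructor
    · intro r hr0
      obtain ⟨c, hc⟩ := Function.ne_iff.mp (hA.1.1 (f r))
      apply hc
      rw [← hmat r c, hr0]
      rfl
    · intro r
      exact ((hA.1.2 (f r)).image e).subset (hsupp r)
  · intro T hT k col
    obtain ⟨x, hxS, m, hxm⟩ := hA.2 T hT k col
    set x' : κ' → ℝ := fun j' => if h : ∃ c, e c = j' then x h.choose else s₀ with hx'
    have hx'e : ∀ c, x' (e c) = x c := by
      intro c
      have h : ∃ c0, e c0 = e c := ⟨c, rfl⟩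
      simp only [hx', dif_pos h]
      rw [he h.choose_spec]
    have hent : ∀ r, mEntry A' x' r = mEntry A x (f r) := by
      intro r
      have hs : Function.support (fun j' => (A' r j' : ℝ) * x' j') ⊆ Set.range e := by
        intro c' hc'
        by_contra h
        apply hc'
        show (A' r c' : ℝ) * x' c' = 0
        rw [hz r c' (fun c hc => h ⟨c, hc⟩)]
        simp
      rw [mEntry, finsum_comp_inj e he hs]
      simp only [hmat, hx'e]
      rfl
    refine ⟨x', fun j' => ?_, m, fun r => by rw [hent r]; exact hxm (f r)⟩
    simp only [hx']
    split
    · exact hxS _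
    · exact hs₀

/-! ### The iterated block matrix -/

lemma blockN_zero {S : Set ℝ} {ι κ : Fin 0 → Type} (Mf : ∀ i, ι i → κ i → ℚ) :
    MemM0 S (blockN 0 Mf) := by
  refine ⟨⟨fun i => i.1.elim0, fun i => i.1.elim0⟩, ?_⟩
  intro T hT k c
  exact ⟨fun j => j.1.elim0, fun j => j.1.elim0, 0, fun i => i.1.elim0⟩

lemma blockN_one {S : Set ℝ} (hS : IsPosSubsemigroup S) {ι κ : Fin 1 → Type}
    (Mf : ∀ i, ι i → κ i → ℚ) (h : ∀ i, MemM0 S (Mf i)) : MemM0 S (blockN 1 Mf) := by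
  refine memM0_of_inj hS (h 0)
    (fun r => match r with
      | ⟨⟨0, _⟩, a⟩ => a
      | ⟨⟨_+1, hlt⟩, _⟩ => absurd hlt (by omega))
    (fun j => ⟨0, Sum.inr j⟩) ?_ ?_ ?_
  · intro a b hab
    simpa using hab
  · rintro r ⟨⟨cv, hc⟩, (u | j)⟩ hne
    · interval_cases cv
      rcases r with ⟨⟨rv, hr⟩, a⟩
      interval_cases rv
      simp [blockN]
    · interval_cases cv
      exact absurd rfl (hne j)
  · rintro ⟨⟨rv, hr⟩, a⟩ j
    interval_cases rv
    rfl

lemma blockN_succ {S : Set ℝ} (hS : IsPosSubsemigroup S) {n : ℕ} (hn : 0 < n)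
    {ι κ : Fin (n+1) → Type} (Mf : ∀ i, ι i → κ i → ℚ)
    (hA : MemM0 S (oneBM (Mf 0) (blockN n (fun i : Fin n => Mf i.succ)))) :
    MemM0 S (blockN (n+1) Mf) := by
  refine memM0_of_inj hS hA
    (fun r => match r with
      | ⟨⟨0, _⟩, a⟩ => Sum.inl a
      | ⟨⟨iv+1, hlt⟩, a⟩ => Sum.inr ⟨⟨iv, by omega⟩, a⟩)
    (fun c => match c with
      | Sum.inl _ => ⟨0, Sum.inl ()⟩
      | Sum.inr (Sum.inl j) => ⟨0, Sum.inr j⟩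
      | Sum.inr (Sum.inr ⟨i, u⟩) => ⟨i.succ, u⟩) ?_ ?_ ?_
  · apply Function.LeftInverse.injective
      (g := fun s => match s with
        | ⟨⟨0, _⟩, Sum.inl _⟩ => Sum.inl ()
        | ⟨⟨0, _⟩, Sum.inr j⟩ => Sum.inr (Sum.inl j)
        | ⟨⟨iv+1, hlt⟩, u⟩ => Sum.inr (Sum.inr ⟨⟨iv, by omega⟩, u⟩))
    rintro (u | j | ⟨⟨iv, hlt⟩, u⟩)
    · rfl
    · rfl
    · rfl
  · rintro r ⟨⟨cv, hc⟩, u⟩ hne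
    exfalso
    match cv, hc, u with
    | 0, hc, Sum.inl u => exact hne (Sum.inl ()) rfl
    | 0, hc, Sum.inr j => exact hne (Sum.inr (Sum.inl j)) rfl
    | cv+1, hc, u => exact hne (Sum.inr (Sum.inr ⟨⟨cv, by omega⟩, u⟩)) rfl
  · rintro ⟨⟨rv, hr⟩, a⟩ (u | j | ⟨⟨cv, hc⟩, u⟩)
    · match rv, hr with
      | 0, hr => exact (dif_pos rfl).trans (if_pos (by show (0:ℕ)+1 < n+1; omega))
      | rv+1, hr => exact dif_neg (by simp [Fin.ext_iff])
    · match rv, hr with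
      | 0, hr => exact dif_pos rfl
      | rv+1, hr => exact dif_neg (by simp [Fin.ext_iff])
    · match rv, hr with
      | 0, hr => exact dif_neg (by simp [Fin.ext_iff])
      | rv+1, hr =>
        rcases eq_or_ne rv cv with hrc | hrc
        · subst hrc
          cases u with
          | inl u =>
            have h1 : blockN (n+1) Mf ⟨⟨rv+1, hr⟩, a⟩ ⟨Fin.succ ⟨rv, hc⟩, Sum.inl u⟩
                = if rv + 1 + 1 < n + 1 then 1 else 0 := dif_pos rfl
            have h2 : blockN n (fun i : Fin n => Mf i.succ) ⟨⟨rv, by omega⟩, a⟩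
                ⟨⟨rv, hc⟩, Sum.inl u⟩ = if rv + 1 < n then 1 else 0 := dif_pos rfl
            refine h1.trans (Eq.trans ?_ h2.symm)
            by_cases hcase : rv + 1 < n
            · rw [if_pos hcase, if_pos (by omega)]
            · rw [if_neg hcase, if_neg (by omega)]
          | inr j =>
            have h1 : blockN (n+1) Mf ⟨⟨rv+1, hr⟩, a⟩ ⟨Fin.succ ⟨rv, hc⟩, Sum.inr j⟩
                = Mf (Fin.succ ⟨rv, hc⟩) a j := dif_pos rfl
            have h2 : blockN n (fun i : Fin n => Mf i.succ) ⟨⟨rv, by omega⟩, a⟩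
                ⟨⟨rv, hc⟩, Sum.inr j⟩ = Mf (Fin.succ ⟨rv, hc⟩) a j := dif_pos rfl
            exact h1.trans h2.symm
        · exact (dif_neg (by simp [Fin.ext_iff]; omega)).trans
            ((dif_neg (by simp [Fin.ext_iff]; omega)) : blockN n (fun i : Fin n => Mf i.succ)
              ⟨⟨rv, by omega⟩, a⟩ ⟨⟨cv, hc⟩, u⟩ = 0).symm

lemma blockN_memM0 {S : Set ℝ} (hS : IsPosSubsemigroup S) (hd : DenseNearZero S) :
    ∀ (n : ℕ) (ι κ : Fin n → Type) (Mf : ∀ i, ι i → κ i → ℚ),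
      (∀ i, MemM0 S (Mf i)) → MemM0 S (blockN n Mf) := by
  intro n
  induction n with
  | zero => exact fun ι κ Mf _ => blockN_zero Mf
  | succ n ih =>
    intro ι κ Mf h
    cases n with
    | zero => exact blockN_one hS Mf h
    | succ m =>
      refine blockN_succ hS (Nat.succ_pos m) Mf ?_
      exact oneBM_memM0 hS hd (h 0) (ih _ _ (fun i => Mf i.succ) (fun i => h i.succ))

end Aux

/-- If `B, M ∈ 𝓜₀(S)` then `(1̄ B 0 ; 0̄ 0 M) ∈ 𝓜₀(S)`; consequently
for any `n ∈ ℕ` and `M₁, …, Mₙ ∈ 𝓜₀(S)` the iterated block matrix with rows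
`(1̄ M₁ 0 ⋯ 0)`, `(0 0 1̄ M₂ ⋯ 0)`, …, `(0 ⋯ 0 Mₙ)` belongs to `𝓜₀(S)`. -/
theorem stmt18 {ι κ ιM κM : Type} [Countable ι] [Countable κ] [Countable ιM]
    [Countable κM] [Nonempty ι] [Nonempty κ]
    (S : Set ℝ) (hS : IsPosSubsemigroup S) (hd : DenseNearZero S)
    (B : ι → κ → ℚ) (hB : MemM0 S B) (M : ιM → κM → ℚ) (hM : MemM0 S M) :
    MemM0 S (oneBM B M) ∧
      ∀ (n : ℕ) (ιf κf : Fin n → Type) (Mf : ∀ i, ιf i → κf i → ℚ),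
        (∀ i, MemM0 S (Mf i)) → MemM0 S (blockN n Mf) := by
  exact ⟨oneBM_memM0 hS hd hB hM, fun n ιf κf Mf h => blockN_memM0 hS hd n ιf κf Mf h⟩
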